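/- The Log-Cholesky map is an isometry onto a Euclidean space: the map Φ(Y) = (⌊𝓛(Y)⌋, log 𝔻(𝓛(Y))) from m×m SPD matrices to (strictly lower triangular matrices) × (diagonal matrices) ≅ ℝ^{m(m+1)/2} satisfies d_L(Y₁, Y₂) = ‖Φ(Y₁) − Φ(Y₂)‖ for all SPD Y₁, Y₂, and is a bijection. -/

import Mathlib

open Finset Matrix

/-- Strictly lower triangular part of a matrix. -/
def strictLowerPart {m : ℕ} (P : Matrix (Fin m) (Fin m) ℝ) :
    Matrix (Fin m) (Fin m) ℝ :=
  fun i j => if j < i then P i j else 0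

/-- Log-Cholesky distance expressed via Cholesky factors `P, Q`. -/
noncomputable def dLfac {m : ℕ} (P Q : Matrix (Fin m) (Fin m) ℝ) : ℝ :=
  Real.sqrt ((∑ i, ∑ j, (strictLowerPart P i j - strictLowerPart Q i j) ^ 2) +
    ∑ i, (Real.log (P i i) - Real.log (Q i i)) ^ 2)

/-- Symmetric positive-definite `m × m` real matrices. -/
def SPD (m : ℕ) := {Y : Matrix (Fin m) (Fin m) ℝ // Y.PosDef}

/-- Strictly lower triangular `m × m` real matrices. -/
def StrictLowerTriangular (m : ℕ) :=
  {A : Matrix (Fin m) (Fin m) ℝ // ∀ i j : Fin m, i ≤ j → A i j = 0}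

namespace LogCholAux

variable {m : ℕ}

abbrev Mat (m : ℕ) := Matrix (Fin m) (Fin m) ℝ

/-- Cholesky-factor predicate. -/
def IsChol (L Y : Mat m) : Prop :=
  (∀ i j : Fin m, i < j → L i j = 0) ∧ (∀ i, 0 < L i i) ∧ L * Lᵀ = Y

lemma ltri_bt {L : Mat m} (h : ∀ i j : Fin m, i < j → L i j = 0) :
    L.BlockTriangular OrderDual.toDual := fun i j hij => h i j hij

lemma det_pos_chol {L : Mat m} (h1 : ∀ i j : Fin m, i < j → L i j = 0)
    (h2 : ∀ i, 0 < L i i) : 0 < L.det := by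
  rw [Matrix.det_of_lowerTriangular L (ltri_bt h1)]
  exact Finset.prod_pos fun i _ => h2 i

lemma diag_mul {A B : Mat m} (hA : ∀ i j : Fin m, i < j → A i j = 0)
    (hB : ∀ i j : Fin m, i < j → B i j = 0) (i : Fin m) :
    (A * B) i i = A i i * B i i := by
  rw [Matrix.mul_apply]
  apply Finset.sum_eq_single i
  · intro k _ hk
    rcases lt_or_gt_of_ne hk with h | h
    · rw [hB k i h, mul_zero]
    · rw [hA i k h, zero_mul]
  · simp

lemma posDef_mul_transpose {L : Mat m} (hL : IsUnit L.det) : (L * Lᵀ).PosDef := by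
  refine Matrix.PosDef.of_dotProduct_mulVec_pos ?_ ?_
  · have := Matrix.isHermitian_mul_conjTranspose_self L
    rwa [Matrix.conjTranspose_eq_transpose_of_trivial] at this
  · intro x hx
    have hxL : Lᵀ *ᵥ x ≠ 0 := by
      intro h
      apply hx
      have : IsUnit (Lᵀ).det := by rwa [Matrix.det_transpose]
      exact (Matrix.mulVec_injective_iff_isUnit.2 ((Matrix.isUnit_iff_isUnit_det _).2 this)) (by simpa using h)
    have key : star x ⬝ᵥ (L * Lᵀ) *ᵥ x = (Lᵀ *ᵥ x) ⬝ᵥ (Lᵀ *ᵥ x) := by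
      rw [show (star x : Fin m → ℝ) = x from funext fun i => star_trivial _,
        ← Matrix.mulVec_mulVec, Matrix.dotProduct_mulVec, ← Matrix.mulVec_transpose]
    rw [key]
    have h0 : (Lᵀ *ᵥ x) ⬝ᵥ (Lᵀ *ᵥ x) ≠ 0 := by
      rwa [Ne, dotProduct_self_eq_zero]
    have h1 : 0 ≤ (Lᵀ *ᵥ x) ⬝ᵥ (Lᵀ *ᵥ x) :=
      Finset.sum_nonneg fun i _ => mul_self_nonneg _
    exact lt_of_le_of_ne h1 (Ne.symm h0)


lemma exists_chol {m : ℕ} {Y : Mat m} (hY : Y.PosDef) : ∃ L : Mat m, IsChol L Y := by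
  letI wflt : WellFoundedLT (Fin m) := inferInstance
  letI deq : DecidableEq (Fin m) := fun a b => LinearOrder.toDecidableEq a b
  haveI inv1 : Invertible (LDL.lowerInv hY) := LDL.invertibleLowerInv hY
  have hAtri : (LDL.lowerInv hY).BlockTriangular OrderDual.toDual :=
    fun i j hij => LDL.lowerInv_triangular hY hij
  have hAdet : IsUnit (LDL.lowerInv hY).det := Matrix.isUnit_det_of_invertible _
  have hrow : ∀ i, LDL.lowerInv hY i ≠ 0 := by
    intro i h
    have h1 : (LDL.lowerInv hY * (LDL.lowerInv hY)⁻¹) i i = 1 := by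
      rw [Matrix.mul_nonsing_inv _ hAdet, Matrix.one_apply_eq]
    rw [Matrix.mul_apply] at h1
    simp only [show ∀ k, LDL.lowerInv hY i k = 0 from fun k => congrFun h k, zero_mul,
      Finset.sum_const_zero] at h1
    exact zero_ne_one h1
  have hd : ∀ i, 0 < LDL.diagEntries hY i := by
    intro i
    have hdiag : LDL.diag hY = LDL.lowerInv hY * Y * (LDL.lowerInv hY)ᴴ :=
      LDL.diag_eq_lowerInv_conj hY
    have h1 : LDL.diagEntries hY i = (LDL.lowerInv hY * Y * (LDL.lowerInv hY)ᴴ) i i := by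
      conv_rhs => rw [← hdiag]
      simp only [LDL.diag, Matrix.diagonal_apply_eq]
    rw [Matrix.conjTranspose_eq_transpose_of_trivial, Matrix.mul_mul_apply,
      Matrix.transpose_transpose] at h1
    have h2 := hY.dotProduct_mulVec_pos (hrow i)
    rwa [show (star (LDL.lowerInv hY i) : Fin m → ℝ) = LDL.lowerInv hY i from
      funext fun k => star_trivial _, ← h1] at h2
  have hltri : (LDL.lower hY).BlockTriangular OrderDual.toDual :=
    Matrix.blockTriangular_inv_of_blockTriangular hAtri
  have hldet : IsUnit (LDL.lower hY).det := by
    have h1 : LDL.lower hY * LDL.lowerInv hY = 1 := by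
      rw [LDL.lower]; exact Matrix.nonsing_inv_mul _ hAdet
    have hdet : (LDL.lower hY).det * (LDL.lowerInv hY).det = 1 := by
      rw [← Matrix.det_mul, h1, Matrix.det_one]
    exact IsUnit.of_mul_eq_one _ hdet
  have hlne : ∀ i, LDL.lower hY i i ≠ 0 := by
    intro i h
    have : (LDL.lower hY).det = 0 := by
      rw [Matrix.det_of_lowerTriangular _ hltri]
      exact Finset.prod_eq_zero (Finset.mem_univ i) h
    exact hldet.ne_zero this
  set c : Fin m → ℝ :=
    fun i => (if 0 < LDL.lower hY i i then 1 else -1) * Real.sqrt (LDL.diagEntries hY i)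
    with hcdef
  have hcc : ∀ i, c i * c i = LDL.diagEntries hY i := by
    intro i
    rcases le_or_gt (LDL.lower hY i i) 0 with h | h
    · simp only [hcdef, if_neg (not_lt.2 h)]
      rw [mul_mul_mul_comm]
      simp [Real.mul_self_sqrt (hd i).le]
    · simp only [hcdef, if_pos h]
      rw [mul_mul_mul_comm]
      simp [Real.mul_self_sqrt (hd i).le]
  refine ⟨LDL.lower hY * Matrix.diagonal c, ?_, ?_, ?_⟩
  · intro i j hij
    rw [Matrix.mul_apply]
    apply Finset.sum_eq_zero
    intro k _
    rcases ne_or_eq k j with hk | hk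
    · rw [Matrix.diagonal_apply_ne _ hk, mul_zero]
    · subst hk
      rw [hltri (show OrderDual.toDual k < OrderDual.toDual i from hij), zero_mul]
  · intro i
    have h1 : (LDL.lower hY * Matrix.diagonal c) i i = LDL.lower hY i i * c i := by
      rw [Matrix.mul_apply,
        Finset.sum_eq_single i (fun k _ hk => by rw [Matrix.diagonal_apply_ne _ hk, mul_zero])
          (by simp), Matrix.diagonal_apply_eq]
    rw [h1, hcdef]
    have hsq : 0 < Real.sqrt (LDL.diagEntries hY i) := Real.sqrt_pos.2 (hd i)
    by_cases h : 0 < LDL.lower hY i i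
    · simp only [if_pos h]; nlinarith
    · simp only [if_neg h]
      have : LDL.lower hY i i < 0 := lt_of_le_of_ne (not_lt.1 h) (hlne i)
      nlinarith
  · have hdd : Matrix.diagonal c * (Matrix.diagonal c)ᵀ = LDL.diag hY := by
      rw [Matrix.diagonal_transpose, Matrix.diagonal_mul_diagonal, LDL.diag]
      exact congrArg _ (funext hcc)
    calc LDL.lower hY * Matrix.diagonal c * (LDL.lower hY * Matrix.diagonal c)ᵀ
        = LDL.lower hY * (Matrix.diagonal c * (Matrix.diagonal c)ᵀ) * (LDL.lower hY)ᵀ := by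
          rw [Matrix.transpose_mul]
          simp only [Matrix.mul_assoc]
      _ = LDL.lower hY * LDL.diag hY * (LDL.lower hY)ᴴ := by
          rw [hdd, Matrix.conjTranspose_eq_transpose_of_trivial]
      _ = Y := LDL.lower_conj_diag hY

lemma chol_unique {m : ℕ} {Y L₁ L₂ : Mat m} (h1 : IsChol L₁ Y) (h2 : IsChol L₂ Y) :
    L₁ = L₂ := by
  obtain ⟨t1, d1, e1⟩ := h1
  obtain ⟨t2, d2, e2⟩ := h2
  have det1 : IsUnit L₁.det := (det_pos_chol t1 d1).ne'.isUnit
  have det2 : IsUnit L₂.det := (det_pos_chol t2 d2).ne'.isUnit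
  have det1t : IsUnit (L₁ᵀ).det := by rwa [Matrix.det_transpose]
  haveI := Matrix.invertibleOfIsUnitDet _ det1
  haveI := Matrix.invertibleOfIsUnitDet _ det2
  have h : L₁ * L₁ᵀ = L₂ * L₂ᵀ := e1.trans e2.symm
  have key : L₂⁻¹ * L₁ = (L₁⁻¹ * L₂)ᵀ := by
    rw [Matrix.transpose_mul, Matrix.transpose_nonsing_inv]
    calc L₂⁻¹ * L₁ = L₂⁻¹ * (L₁ * (L₁ᵀ * (L₁ᵀ)⁻¹)) := by
          rw [Matrix.mul_nonsing_inv _ det1t, Matrix.mul_one]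
      _ = L₂⁻¹ * (L₁ * L₁ᵀ) * (L₁ᵀ)⁻¹ := by simp only [Matrix.mul_assoc]
      _ = L₂⁻¹ * L₂ * L₂ᵀ * (L₁ᵀ)⁻¹ := by rw [h]; simp only [Matrix.mul_assoc]
      _ = L₂ᵀ * (L₁ᵀ)⁻¹ := by rw [Matrix.nonsing_inv_mul _ det2, Matrix.one_mul]
  have i2tri : (L₂⁻¹).BlockTriangular OrderDual.toDual :=
    Matrix.blockTriangular_inv_of_blockTriangular (ltri_bt t2)
  have i1tri : (L₁⁻¹).BlockTriangular OrderDual.toDual :=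
    Matrix.blockTriangular_inv_of_blockTriangular (ltri_bt t1)
  have Mtri : (L₂⁻¹ * L₁).BlockTriangular OrderDual.toDual := i2tri.mul (ltri_bt t1)
  have Ntri : (L₁⁻¹ * L₂).BlockTriangular OrderDual.toDual := i1tri.mul (ltri_bt t2)
  -- diagonal entries of the inverses
  have dinv : ∀ (L : Mat m), (∀ i j : Fin m, i < j → L i j = 0) →
      (L.BlockTriangular OrderDual.toDual) → ((L⁻¹).BlockTriangular OrderDual.toDual) →
      IsUnit L.det → ∀ i, (L⁻¹) i i * L i i = 1 := by
    intro L hL hbt hibt hdet i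
    have := diag_mul (fun i j hij => hibt hij) hL i
    rw [Matrix.nonsing_inv_mul _ hdet, Matrix.one_apply_eq] at this
    exact this.symm
  have dinv1 := dinv L₁ t1 (ltri_bt t1) i1tri det1
  have dinv2 := dinv L₂ t2 (ltri_bt t2) i2tri det2
  -- diagonal of M equals diagonal of N
  have hdiagMN : ∀ i, (L₂⁻¹) i i * L₁ i i = (L₁⁻¹) i i * L₂ i i := by
    intro i
    have hM := diag_mul (fun i j hij => i2tri hij) t1 i
    have hN := diag_mul (fun i j hij => i1tri hij) t2 i
    have := congrFun (congrFun key i) i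
    rw [Matrix.transpose_apply] at this
    rw [← hM, ← hN, this]
  have hdiag_eq : ∀ i, L₁ i i = L₂ i i := by
    intro i
    have h1 := hdiagMN i
    have e1' := dinv1 i
    have e2' := dinv2 i
    have p1 := d1 i
    have p2 := d2 i
    have h2 : (L₂⁻¹ i i * L₂ i i) * (L₁ i i * L₁ i i)
        = (L₁⁻¹ i i * L₁ i i) * (L₂ i i * L₂ i i) := by
      linear_combination (L₁ i i * L₂ i i) * h1
    rw [e1', e2', one_mul, one_mul] at h2
    nlinarith
  -- M = 1
  have hM1 : L₂⁻¹ * L₁ = 1 := by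
    ext i j
    rcases eq_or_ne i j with rfl | hij
    · have hM := diag_mul (fun i j hij => i2tri hij) t1 i
      rw [hM, hdiag_eq i, dinv2 i, Matrix.one_apply_eq]
    · rw [Matrix.one_apply_ne hij]
      rcases lt_or_gt_of_ne hij with hlt | hgt
      · exact Mtri (show OrderDual.toDual j < OrderDual.toDual i from hlt)
      · have := congrFun (congrFun key i) j
        rw [Matrix.transpose_apply] at this
        rw [this]
        exact Ntri (show OrderDual.toDual i < OrderDual.toDual j from hgt)
  calc L₁ = L₂ * L₂⁻¹ * L₁ := by rw [Matrix.mul_nonsing_inv _ det2, Matrix.one_mul]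
    _ = L₂ * (L₂⁻¹ * L₁) := by rw [Matrix.mul_assoc]
    _ = L₂ := by rw [hM1, Matrix.mul_one]

end LogCholAux

/-- The Log-Cholesky map is a bijective isometry onto a
Euclidean space: there is a Cholesky factorization map `chol` on SPD matrices
(lower triangular with positive diagonal, `chol Y ⬝ (chol Y)ᵀ = Y`), and the
map `Φ(Y) = (⌊chol Y⌋, log 𝔻(chol Y))` into
(strictly lower triangular matrices) × ℝ^m ≅ ℝ^{m(m+1)/2} is a bijection
satisfying `d_L(Y₁, Y₂) = ‖Φ(Y₁) − Φ(Y₂)‖`. -/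
theorem logCholesky_isometry_bijective (m : ℕ) :
    ∃ chol : SPD m → Matrix (Fin m) (Fin m) ℝ,
      (∀ Y : SPD m, (∀ i j : Fin m, i < j → chol Y i j = 0) ∧
        (∀ i : Fin m, 0 < chol Y i i) ∧ chol Y * (chol Y)ᵀ = Y.1) ∧
      ∃ Φ : SPD m → StrictLowerTriangular m × (Fin m → ℝ),
        (∀ Y : SPD m, ((Φ Y).1.1 : Matrix (Fin m) (Fin m) ℝ)
            = strictLowerPart (chol Y)) ∧
        (∀ Y : SPD m, ∀ i : Fin m, (Φ Y).2 i = Real.log (chol Y i i)) ∧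
        Function.Bijective Φ ∧
        (∀ Y₁ Y₂ : SPD m, dLfac (chol Y₁) (chol Y₂) =
          Real.sqrt ((∑ i, ∑ j, ((Φ Y₁).1.1 i j - (Φ Y₂).1.1 i j) ^ 2) +
            ∑ i, ((Φ Y₁).2 i - (Φ Y₂).2 i) ^ 2)) := by
  classical
  let chol : SPD m → LogCholAux.Mat m := fun Y => (LogCholAux.exists_chol Y.2).choose
  have spec : ∀ Y : SPD m, LogCholAux.IsChol (chol Y) Y.1 :=
    fun Y => (LogCholAux.exists_chol Y.2).choose_spec
  refine ⟨chol, fun Y => spec Y, ?_⟩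
  have hslt : ∀ Y : SPD m, ∀ i j : Fin m, i ≤ j → strictLowerPart (chol Y) i j = 0 := by
    intro Y i j hij
    simp [strictLowerPart, not_lt.2 hij]
  refine ⟨fun Y => (⟨strictLowerPart (chol Y), hslt Y⟩, fun i => Real.log (chol Y i i)),
    fun Y => rfl, fun Y i => rfl, ⟨?_, ?_⟩, fun Y₁ Y₂ => rfl⟩
  · -- injective
    intro Y₁ Y₂ h
    have h1 : strictLowerPart (chol Y₁) = strictLowerPart (chol Y₂) :=
      congrArg (fun p => p.1.1) h
    have h2 : ∀ i, Real.log (chol Y₁ i i) = Real.log (chol Y₂ i i) :=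
      fun i => congrFun (congrArg Prod.snd h) i
    have hc : chol Y₁ = chol Y₂ := by
      ext i j
      rcases lt_trichotomy j i with hlt | heq | hgt
      · have := congrFun (congrFun h1 i) j
        simpa [strictLowerPart, hlt] using this
      · rw [heq, ← Real.exp_log ((spec Y₁).2.1 i), h2 i, Real.exp_log ((spec Y₂).2.1 i)]
      · rw [(spec Y₁).1 i j hgt, (spec Y₂).1 i j hgt]
    have hY : Y₁.1 = Y₂.1 := by rw [← (spec Y₁).2.2, ← (spec Y₂).2.2, hc]
    exact Subtype.ext hY
  · -- surjective
    rintro ⟨A, v⟩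
    set L : LogCholAux.Mat m := A.1 + Matrix.diagonal (fun i => Real.exp (v i)) with hLdef
    have hLt : ∀ i j : Fin m, i < j → L i j = 0 := by
      intro i j hij
      simp [hLdef, Matrix.diagonal_apply_ne _ (ne_of_lt hij), A.2 i j hij.le]
    have hLd : ∀ i, 0 < L i i := by
      intro i
      simp [hLdef, A.2 i i le_rfl, Real.exp_pos]
    have hdet : IsUnit L.det := (LogCholAux.det_pos_chol hLt hLd).ne'.isUnit
    have pd : (L * Lᵀ).PosDef := LogCholAux.posDef_mul_transpose hdet
    refine ⟨⟨L * Lᵀ, pd⟩, ?_⟩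
    have hIs : LogCholAux.IsChol L (L * Lᵀ) := ⟨hLt, hLd, rfl⟩
    have hchol : chol ⟨L * Lᵀ, pd⟩ = L := LogCholAux.chol_unique (spec ⟨L * Lᵀ, pd⟩) hIs
    have hA : strictLowerPart (chol ⟨L * Lᵀ, pd⟩) = A.1 := by
      rw [hchol]
      ext i j
      rcases lt_or_ge j i with hlt | hle
      · simp [strictLowerPart, hlt, hLdef, Matrix.diagonal_apply_ne _ (ne_of_gt hlt)]
      · simp [strictLowerPart, not_lt.2 hle, (A.2 i j hle).symm]
    have hv : (fun i => Real.log (chol ⟨L * Lᵀ, pd⟩ i i)) = v := by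
      funext i
      rw [hchol]
      simp [hLdef, A.2 i i le_rfl, Real.log_exp]
    exact Prod.ext (Subtype.ext hA) hv
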